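/- Let N and R be f_P × 3 real matrices with N of full rank 3, and suppose R^T N = |P| K for a symmetric positive definite 3×3 matrix K and |P| > 0. Let C be an f_P × (f_P − 3) matrix whose columns span the null space of N^T, and U an arbitrary symmetric positive definite (f_P−3)×(f_P−3) matrix. Then M = (1/|P|) R K^{-1} R^T + C U C^T is a symmetric matrix satisfying M N = R. -/
import Mathlib


open Matrix

/-- With `N` of full rank `3`, `Rᵀ N = |P| K` for `K` SPD and `|P| > 0`,
`C` an `f_P × (f_P - 3)` matrix whose columns span the null space of `Nᵀ`, and `U` an arbitrary
SPD matrix, the matrix `M = (1/|P|) R K⁻¹ Rᵀ + C U Cᵀ` is symmetric and satisfies `M N = R`. -/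
theorem mfd_family_member_is_consistent
    (m : ℕ) (vol : ℝ) (hvol : 0 < vol)
    (K : Matrix (Fin 3) (Fin 3) ℝ) (hK : K.PosDef) (hKs : K.IsSymm)
    (N R : Matrix (Fin m) (Fin 3) ℝ)
    (hrank : N.rank = 3)
    (hRN : Rᵀ * N = vol • K)
    (C : Matrix (Fin m) (Fin (m - 3)) ℝ)
    (hC : Set.range C.mulVec = {x | Nᵀ.mulVec x = 0})
    (U : Matrix (Fin (m - 3)) (Fin (m - 3)) ℝ) (hU : U.PosDef) (hUs : U.IsSymm) :
    (vol⁻¹ • (R * K⁻¹ * Rᵀ) + C * U * Cᵀ).IsSymm ∧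
      (vol⁻¹ • (R * K⁻¹ * Rᵀ) + C * U * Cᵀ) * N = R := by
  have hKinv : (K⁻¹)ᵀ = K⁻¹ := by
    rw [Matrix.transpose_nonsing_inv, hKs.eq]
  have hKunit : IsUnit K.det := hK.det_pos.ne'.isUnit
  constructor
  · unfold Matrix.IsSymm
    simp [transpose_add, transpose_smul, Matrix.transpose_mul, hKinv, hUs.eq, Matrix.mul_assoc]
  · have hCN : Cᵀ * N = 0 := by
      have hNC : Nᵀ * C = 0 := by
        ext i j
        have hcol : (fun k => C k j) ∈ Set.range C.mulVec := by
          refine ⟨Pi.single j 1, ?_⟩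
          ext k
          simp [Matrix.mulVec, dotProduct, Pi.single_apply]
        rw [hC] at hcol
        have := congrFun hcol i
        simpa [Matrix.mul_apply, Matrix.mulVec, dotProduct] using this
      calc Cᵀ * N = (Nᵀ * C)ᵀ := by rw [transpose_mul, transpose_transpose]
        _ = 0 := by rw [hNC, transpose_zero]
    rw [Matrix.add_mul, Matrix.mul_assoc (C * U), hCN, Matrix.mul_zero, add_zero,
      Matrix.smul_mul, Matrix.mul_assoc, Matrix.mul_assoc, hRN, Matrix.mul_smul,
      Matrix.nonsing_inv_mul K hK.det_pos.ne'.isUnit]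
    simp [smul_smul, inv_mul_cancel₀ hvol.ne']
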